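/- Let θ : ℝ → ℝ be continuous and nonnegative, and let a : [x₁, x₂] → ℝ be differentiable with a(x) ≥ 1 for all x and a'(x) ≤ θ(x) √(a(x)² − 1) on [x₁,x₂]. Then arcosh(a(x₂)) − arcosh(a(x₁)) ≤ ∫_{x₁}^{x₂} θ(x) dx; in particular if a(x₁) = 1 then a(x₂) ≤ cosh(∫_{x₁}^{x₂} θ dx). -/

import Mathlib

noncomputable def arcosh (x : ℝ) : ℝ := Real.log (x + Real.sqrt (x^2 - 1))

lemma arcosh_nonneg {x : ℝ} (hx : 1 ≤ x) : 0 ≤ arcosh x := by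
  unfold arcosh
  apply Real.log_nonneg
  nlinarith [Real.sqrt_nonneg (x^2 - 1)]

lemma arcosh_pos {x : ℝ} (hx : 1 < x) : 0 < arcosh x := by
  unfold arcosh
  apply Real.log_pos
  nlinarith [Real.sqrt_nonneg (x^2 - 1)]

lemma cosh_arcosh {x : ℝ} (hx : 1 ≤ x) : Real.cosh (arcosh x) = x := by
  have hs : (0:ℝ) ≤ x^2 - 1 := by nlinarith
  have hsq : Real.sqrt (x^2-1) ^ 2 = x^2 - 1 := Real.sq_sqrt hs
  have hpos : (0:ℝ) < x + Real.sqrt (x^2 - 1) := by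
    nlinarith [Real.sqrt_nonneg (x^2 - 1)]
  unfold arcosh
  rw [Real.cosh_eq, Real.exp_log hpos, Real.exp_neg, Real.exp_log hpos]
  field_simp
  nlinarith [hsq]

lemma sinh_eq_sqrt {t : ℝ} (ht : 0 ≤ t) :
    Real.sqrt (Real.cosh t ^ 2 - 1) = Real.sinh t := by
  have h : Real.cosh t ^ 2 - 1 = Real.sinh t ^ 2 := by
    have := Real.cosh_sq t; linarith
  rw [h, Real.sqrt_sq (Real.sinh_nonneg_iff.mpr ht)]

lemma arcosh_cosh {t : ℝ} (ht : 0 ≤ t) : arcosh (Real.cosh t) = t := by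
  unfold arcosh
  rw [sinh_eq_sqrt ht, Real.cosh_add_sinh, Real.log_exp]

lemma arcosh_le_arcosh {x y : ℝ} (hx : 1 ≤ x) (hxy : x ≤ y) :
    arcosh x ≤ arcosh y := by
  unfold arcosh
  have h1 : (0:ℝ) < x + Real.sqrt (x^2-1) := by
    nlinarith [Real.sqrt_nonneg (x^2-1)]
  apply Real.log_le_log h1
  have : Real.sqrt (x^2-1) ≤ Real.sqrt (y^2-1) :=
    Real.sqrt_le_sqrt (by nlinarith)
  linarith

lemma continuousAt_arcosh {x : ℝ} (hx : 1 ≤ x) : ContinuousAt arcosh x := by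
  have h1 : (0:ℝ) < x + Real.sqrt (x^2-1) := by
    nlinarith [Real.sqrt_nonneg (x^2-1)]
  have hc : ContinuousAt (fun y : ℝ => y + Real.sqrt (y^2 - 1)) x := by fun_prop
  unfold arcosh
  exact hc.log h1.ne'

theorem gronwall_arcosh_bound (θ : ℝ → ℝ) (a a' : ℝ → ℝ) (x₁ x₂ : ℝ)
    (hx : x₁ ≤ x₂)
    (hθc : Continuous θ) (hθ0 : ∀ x, 0 ≤ θ x)
    (hderiv : ∀ x ∈ Set.Icc x₁ x₂, HasDerivAt a (a' x) x)
    (ha1 : ∀ x ∈ Set.Icc x₁ x₂, 1 ≤ a x)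
    (hineq : ∀ x ∈ Set.Icc x₁ x₂, a' x ≤ θ x * Real.sqrt ((a x)^2 - 1)) :
    arcosh (a x₂) - arcosh (a x₁) ≤ ∫ x in x₁..x₂, θ x ∧
    (a x₁ = 1 → a x₂ ≤ Real.cosh (∫ x in x₁..x₂, θ x)) := by
  have ha1' : 1 ≤ a x₁ := ha1 x₁ ⟨le_refl _, hx⟩
  have ha2' : 1 ≤ a x₂ := ha1 x₂ ⟨hx, le_refl _⟩
  set T : ℝ := ∫ x in x₁..x₂, θ x with hTdef
  have hT0 : 0 ≤ T := intervalIntegral.integral_nonneg hx (fun x _ => hθ0 x)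
  -- the ε-perturbed comparison
  have key : ∀ ε > (0:ℝ), a x₂ ≤ Real.cosh (arcosh (a x₁ + ε) + T + ε * (x₂ - x₁)) := by
    intro ε hε
    set u : ℝ → ℝ := fun x => arcosh (a x₁ + ε) + (∫ t in x₁..x, θ t) + ε * (x - x₁)
      with hudef
    have hu' : ∀ x, HasDerivAt u (θ x + ε) x := by
      intro x
      have h1 : HasDerivAt (fun x => ∫ t in x₁..x, θ t) (θ x) x :=
        (hθc.integral_hasStrictDerivAt x₁ x).hasDerivAt
      have h2 : HasDerivAt (fun x : ℝ => ε * (x - x₁)) ε x := by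
        simpa using ((hasDerivAt_id x).sub_const x₁).const_mul ε
      exact ((h1.const_add (arcosh (a x₁ + ε))).add h2)
    have hupos : ∀ x ∈ Set.Icc x₁ x₂, 0 < u x := by
      intro x hxm
      have h1 : 0 < arcosh (a x₁ + ε) := arcosh_pos (by linarith)
      have h2 : 0 ≤ ∫ t in x₁..x, θ t :=
        intervalIntegral.integral_nonneg hxm.1 (fun t _ => hθ0 t)
      have h3 : 0 ≤ ε * (x - x₁) := mul_nonneg hε.le (by linarith [hxm.1])
      show (0:ℝ) < arcosh (a x₁ + ε) + (∫ t in x₁..x, θ t) + ε * (x - x₁)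
      linarith
    set B : ℝ → ℝ := fun x => Real.cosh (u x) with hBdef
    have hB' : ∀ x, HasDerivAt B (Real.sinh (u x) * (θ x + ε)) x := by
      intro x
      exact (Real.hasDerivAt_cosh (u x)).comp x (hu' x)
    have hfc : ContinuousOn a (Set.Icc x₁ x₂) :=
      fun x hxm => (hderiv x hxm).continuousAt.continuousWithinAt
    have hfd : ∀ x ∈ Set.Ico x₁ x₂, HasDerivWithinAt a (a' x) (Set.Ici x) x :=
      fun x hxm => (hderiv x (Set.Ico_subset_Icc_self hxm)).hasDerivWithinAt
    have hab : a x₁ ≤ B x₁ := by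
      have hu1 : u x₁ = arcosh (a x₁ + ε) := by
        show arcosh (a x₁ + ε) + (∫ t in x₁..x₁, θ t) + ε * (x₁ - x₁) = _
        simp
      have hB1 : B x₁ = a x₁ + ε := by
        show Real.cosh (u x₁) = _
        rw [hu1]
        exact cosh_arcosh (by linarith)
      linarith
    have hBc : ContinuousOn B (Set.Icc x₁ x₂) :=
      fun x _ => (hB' x).continuousAt.continuousWithinAt
    have hBd : ∀ x ∈ Set.Ico x₁ x₂,
        HasDerivWithinAt B (Real.sinh (u x) * (θ x + ε)) (Set.Ici x) x :=
      fun x _ => (hB' x).hasDerivWithinAt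
    have hbound : ∀ x ∈ Set.Ico x₁ x₂, a x = B x →
        a' x < Real.sinh (u x) * (θ x + ε) := by
      intro x hxm heq
      have hxm' : x ∈ Set.Icc x₁ x₂ := Set.Ico_subset_Icc_self hxm
      have hup : 0 < u x := hupos x hxm'
      have hsinh : Real.sinh (u x) = Real.sqrt (B x ^ 2 - 1) :=
        (sinh_eq_sqrt hup.le).symm
      have hBgt : 1 < B x := by
        show (1:ℝ) < Real.cosh (u x)
        exact Real.one_lt_cosh.mpr hup.ne'
      have hsq : 0 < Real.sqrt (B x ^ 2 - 1) :=
        Real.sqrt_pos.mpr (by nlinarith)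
      calc a' x ≤ θ x * Real.sqrt ((a x)^2 - 1) := hineq x hxm'
        _ = θ x * Real.sqrt (B x ^ 2 - 1) := by rw [heq]
        _ < Real.sqrt (B x ^ 2 - 1) * (θ x + ε) := by nlinarith [hθ0 x]
        _ = Real.sinh (u x) * (θ x + ε) := by rw [hsinh]
    have hcomp :=
      image_le_of_deriv_right_lt_deriv_boundary' hfc hfd hab hBc hBd hbound
    have h2 : u x₂ = arcosh (a x₁ + ε) + T + ε * (x₂ - x₁) := by
      show arcosh (a x₁ + ε) + (∫ t in x₁..x₂, θ t) + ε * (x₂ - x₁) = _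
      rw [hTdef]
    have h3 : B x₂ = Real.cosh (arcosh (a x₁ + ε) + T + ε * (x₂ - x₁)) := by
      show Real.cosh (u x₂) = _
      rw [h2]
    exact h3 ▸ hcomp ⟨hx, le_rfl⟩
  -- take ε → 0⁺
  have hmain : a x₂ ≤ Real.cosh (arcosh (a x₁) + T) := by
    set g : ℝ → ℝ := fun ε => Real.cosh (arcosh (a x₁ + ε) + T + ε * (x₂ - x₁))
      with hgdef
    have hg0 : g 0 = Real.cosh (arcosh (a x₁) + T) := by
      simp [hgdef]
    have hgc : ContinuousAt g 0 := by
      apply Real.continuous_cosh.continuousAt.comp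
      apply ContinuousAt.add
      apply ContinuousAt.add
      · exact (continuousAt_arcosh (by simpa using ha1')).comp
          (continuousAt_const.add continuousAt_id)
      · exact continuousAt_const
      · exact continuousAt_id.mul continuousAt_const
    have ht : Filter.Tendsto g (nhdsWithin 0 (Set.Ioi 0)) (nhds (g 0)) :=
      (hgc.continuousWithinAt).tendsto
    rw [hg0] at ht
    refine ge_of_tendsto ht ?_
    filter_upwards [self_mem_nhdsWithin] with ε hε
    exact key ε hε
  constructor
  · have h1 : arcosh (a x₂) ≤ arcosh (Real.cosh (arcosh (a x₁) + T)) :=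
      arcosh_le_arcosh ha2' hmain
    rw [arcosh_cosh (by linarith [arcosh_nonneg ha1'])] at h1
    linarith
  · intro h1
    have h0 : arcosh (a x₁) = 0 := by
      unfold arcosh; rw [h1]; norm_num
    rw [h0, zero_add] at hmain
    exact hmain
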